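/- If a GO-space (X, τ, <) is monotonically metacompact, then X has a monotone open locally-finite operator. -/

import Mathlib

open Set Topology Filter

variable {X : Type*}

/-- A family `F` of subsets is closure-preserving if for every subfamily `H ⊆ F`,
the closure of the union of `H` is the union of the closures of members of `H`. -/
def ClosurePreserving [TopologicalSpace X] (F : Set (Set X)) : Prop :=
  ∀ H ⊆ F, closure (⋃₀ H) = ⋃ A ∈ H, closure A

/-- A cover `A` refines a cover `B` if every member of `A` is contained in some member of `B`. -/
def Refines (A B : Set (Set X)) : Prop :=
  ∀ s ∈ A, ∃ t ∈ B, s ⊆ t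

/-- An open cover of the space. -/
def IsOpenCover [TopologicalSpace X] (U : Set (Set X)) : Prop :=
  (∀ s ∈ U, IsOpen s) ∧ ⋃₀ U = Set.univ

/-- A monotone closure-preserving operator: assigns to each open cover `U` a
closure-preserving cover `r U` (by arbitrary sets) refining `U`, monotonically. -/
def MonotoneCPOperator [TopologicalSpace X] (r : Set (Set X) → Set (Set X)) : Prop :=
  (∀ U, IsOpenCover U →
    ⋃₀ r U = Set.univ ∧ Refines (r U) U ∧ ClosurePreserving (r U)) ∧
  ∀ U V, IsOpenCover U → IsOpenCover V → Refines U V → Refines (r U) (r V)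

/-- A GO-space: the topology is finer than the order topology (all open rays are open)
and has a base of order-convex sets. -/
def IsGOSpace (X : Type*) [LinearOrder X] [TopologicalSpace X] : Prop :=
  (∀ a : X, IsOpen (Set.Iio a)) ∧ (∀ a : X, IsOpen (Set.Ioi a)) ∧
  ∀ s : Set X, IsOpen s → ∀ x ∈ s, ∃ t : Set X, IsOpen t ∧ x ∈ t ∧ t ⊆ s ∧ t.OrdConnected

namespace Stmt14Aux

variable [LinearOrder X]

theorem ordConnected_union_of_mem {s t : Set X} {y : X} (hs : s.OrdConnected)
    (ht : t.OrdConnected) (hys : y ∈ s) (hyt : y ∈ t) : (s ∪ t).OrdConnected := by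
  rw [ordConnected_def]
  rintro p (hp | hp) q (hq | hq) z hz
  · exact Or.inl (hs.out hp hq hz)
  · rcases le_total z y with h | h
    · exact Or.inl (hs.out hp hys ⟨hz.1, h⟩)
    · exact Or.inr (ht.out hyt hq ⟨h, hz.2⟩)
  · rcases le_total z y with h | h
    · exact Or.inr (ht.out hp hyt ⟨hz.1, h⟩)
    · exact Or.inl (hs.out hys hq ⟨h, hz.2⟩)
  · exact Or.inr (ht.out hp hq hz)

/-- The order-convex component of `A` containing `x`. -/
def convHullAt (A : Set X) (x : X) : Set X :=
  ⋃₀ {s | s ⊆ A ∧ x ∈ s ∧ s.OrdConnected}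

theorem convHullAt_subset (A : Set X) (x : X) : convHullAt A x ⊆ A := by
  rintro y ⟨s, ⟨hsA, -, -⟩, hy⟩; exact hsA hy

theorem subset_convHullAt {A s : Set X} {x : X} (hsA : s ⊆ A) (hxs : x ∈ s)
    (hc : s.OrdConnected) : s ⊆ convHullAt A x :=
  subset_sUnion_of_mem ⟨hsA, hxs, hc⟩

theorem mem_convHullAt {A : Set X} {x : X} (hx : x ∈ A) : x ∈ convHullAt A x :=
  subset_convHullAt (singleton_subset_iff.2 hx) (mem_singleton x)
    ordConnected_singleton (mem_singleton x)

theorem convHullAt_ordConnected (A : Set X) (x : X) : (convHullAt A x).OrdConnected := by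
  rw [ordConnected_def]
  rintro p ⟨s, ⟨hsA, hxs, hs⟩, hp⟩ q ⟨t, ⟨htA, hxt, ht⟩, hq⟩ z hz
  rcases le_total z x with h | h
  · exact subset_convHullAt hsA hxs hs (hs.out hp hxs ⟨hz.1, h⟩)
  · exact subset_convHullAt htA hxt ht (ht.out hxt hq ⟨h, hz.2⟩)

theorem convHullAt_eq_of_mem {A : Set X} {x y : X} (hx : x ∈ A)
    (hy : y ∈ convHullAt A x) : convHullAt A y = convHullAt A x := by
  have h1 : convHullAt A x ⊆ convHullAt A y :=
    subset_convHullAt (convHullAt_subset A x) hy (convHullAt_ordConnected A x)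
  have hxy : x ∈ convHullAt A y := h1 (mem_convHullAt hx)
  exact subset_antisymm
    (subset_convHullAt (convHullAt_subset A y) hxy (convHullAt_ordConnected A y)) h1

variable [TopologicalSpace X]

theorem convHullAt_isOpen
    (hbase : ∀ s : Set X, IsOpen s → ∀ x ∈ s,
      ∃ t : Set X, IsOpen t ∧ x ∈ t ∧ t ⊆ s ∧ t.OrdConnected)
    {A : Set X} (hA : IsOpen A) (x : X) : IsOpen (convHullAt A x) := by
  rw [isOpen_iff_forall_mem_open]
  rintro y ⟨s, ⟨hsA, hxs, hs⟩, hys⟩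
  obtain ⟨t, htop, hyt, htA, htc⟩ := hbase A hA y (hsA hys)
  have hcu : (s ∪ t).OrdConnected := ordConnected_union_of_mem hs htc hys hyt
  refine ⟨t, ?_, htop, hyt⟩
  exact (subset_union_right).trans
    (subset_convHullAt (union_subset hsA htA) (Or.inl hxs) hcu)

/-- All open, order-convex sets contained in some member of `U`. -/
def convCover (U : Set (Set X)) : Set (Set X) :=
  {s | IsOpen s ∧ s.OrdConnected ∧ ∃ t ∈ U, s ⊆ t}

theorem convCover_isOpenCover
    (hbase : ∀ s : Set X, IsOpen s → ∀ x ∈ s,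
      ∃ t : Set X, IsOpen t ∧ x ∈ t ∧ t ⊆ s ∧ t.OrdConnected)
    {U : Set (Set X)} (hU : IsOpenCover U) : IsOpenCover (convCover U) := by
  constructor
  · exact fun s hs => hs.1
  · apply Set.eq_univ_of_forall
    intro x
    have hx : x ∈ ⋃₀ U := hU.2.symm ▸ (mem_univ x)
    obtain ⟨t, htU, hxt⟩ := hx
    obtain ⟨s, hsop, hxs, hst, hsc⟩ := hbase t (hU.1 t htU) x hxt
    exact ⟨s, ⟨hsop, hsc, t, htU, hst⟩, hxs⟩

theorem convCover_refines_self {U : Set (Set X)} : Refines (convCover U) U :=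
  fun s hs => hs.2.2

theorem convCover_mono {U W : Set (Set X)} (h : Refines U W) :
    Refines (convCover U) (convCover W) := by
  rintro s ⟨hop, hc, t, htU, hst⟩
  obtain ⟨t', ht'W, htt'⟩ := h t htU
  exact ⟨s, ⟨hop, hc, t', ht'W, hst.trans htt'⟩, subset_rfl⟩

/-- The convex components of members of `r (convCover U)`. -/
def comps (r : Set (Set X) → Set (Set X)) (U : Set (Set X)) : Set (Set X) :=
  {C | ∃ A ∈ r (convCover U), ∃ x ∈ A, C = convHullAt A x}

theorem comps_pf {r : Set (Set X) → Set (Set X)} {U : Set (Set X)}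
    (hpfr : ∀ y : X, {A ∈ r (convCover U) | y ∈ A}.Finite) :
    ∀ y : X, {C ∈ comps r U | y ∈ C}.Finite := by
  intro y
  apply Set.Finite.subset ((hpfr y).image (fun A => convHullAt A y))
  rintro C ⟨⟨A, hA, x, hxA, rfl⟩, hyC⟩
  exact ⟨A, ⟨hA, convHullAt_subset A x hyC⟩, convHullAt_eq_of_mem hxA hyC⟩

/-- In a point-finite family, every nonempty member is contained in a maximal member. -/
theorem exists_maximal {D : Set (Set X)} (hpf : ∀ y : X, {A ∈ D | y ∈ A}.Finite)
    {C : Set X} (hC : C ∈ D) {y : X} (hy : y ∈ C) :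
    ∃ M ∈ D, C ⊆ M ∧ ∀ E ∈ D, M ⊆ E → M = E := by
  have hfin : {A ∈ D | y ∈ A ∧ C ⊆ A}.Finite :=
    (hpf y).subset (fun A hA => ⟨hA.1, hA.2.1⟩)
  obtain ⟨M, hM, hMmax⟩ :=
    Set.Finite.exists_maximalFor id _ hfin ⟨C, hC, hy, subset_rfl⟩
  refine ⟨M, hM.1, hM.2.2, ?_⟩
  intro E hE hME
  exact subset_antisymm hME (hMmax ⟨hE, hME hM.2.1, hM.2.2.trans hME⟩ hME)

/-- One-sided contradiction: if members of a point-finite family of maximal convex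
sets accumulate to `x` from the right, contradiction. -/
theorem side_contra_right {D : Set (Set X)} {x : X} {E : Set X}
    (hIio : ∀ a : X, IsOpen (Set.Iio a))
    (hpf : ∀ y : X, {A ∈ D | y ∈ A}.Finite)
    (hconv : ∀ A ∈ D, A.OrdConnected)
    (hmax : ∀ A ∈ D, ∀ B ∈ D, A ⊆ B → A = B)
    (hE : E ∈ D) (hxE : x ∈ E) (hEopen : IsOpen E)
    (hbad : ∀ t ∈ 𝓝 x, {A ∈ D | A ⊆ Ioi x ∧ (A ∩ t).Nonempty}.Infinite) : False := by
  obtain ⟨A₀, hA₀D, hA₀sub, q₀, hq₀A₀, hq₀E⟩ :=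
    (hbad E (hEopen.mem_nhds hxE)).nonempty
  have hxq₀ : x < q₀ := hA₀sub hq₀A₀
  have ht' : E ∩ Iio q₀ ∈ 𝓝 x := (hEopen.inter (hIio q₀)).mem_nhds ⟨hxE, hxq₀⟩
  refine (hbad _ ht') ((hpf q₀).subset ?_)
  rintro A ⟨hAD, hAsub, q, hqA, hqE, hqlt⟩
  refine ⟨hAD, ?_⟩
  have hxq : x < q := hAsub hqA
  have hAnE : ¬ A ⊆ E := by
    intro hsub
    have hAE := hmax A hAD E hE hsub
    have : x ∈ A := hAE ▸ hxE
    exact lt_irrefl x (hAsub this)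
  obtain ⟨p, hpA, hpE⟩ := Set.not_subset.mp hAnE
  have hqlep : q ≤ p := by
    by_contra h
    push_neg at h
    exact hpE ((hconv E hE).out hxE hqE ⟨le_of_lt (hAsub hpA), le_of_lt h⟩)
  have hq₀p : q₀ ≤ p := by
    by_contra h
    push_neg at h
    exact hpE ((hconv E hE).out hqE hq₀E ⟨hqlep, le_of_lt h⟩)
  exact (hconv A hAD).out hqA hpA ⟨le_of_lt hqlt, hq₀p⟩

theorem side_contra_left {D : Set (Set X)} {x : X} {E : Set X}
    (hIoi : ∀ a : X, IsOpen (Set.Ioi a))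
    (hpf : ∀ y : X, {A ∈ D | y ∈ A}.Finite)
    (hconv : ∀ A ∈ D, A.OrdConnected)
    (hmax : ∀ A ∈ D, ∀ B ∈ D, A ⊆ B → A = B)
    (hE : E ∈ D) (hxE : x ∈ E) (hEopen : IsOpen E)
    (hbad : ∀ t ∈ 𝓝 x, {A ∈ D | A ⊆ Iio x ∧ (A ∩ t).Nonempty}.Infinite) : False := by
  obtain ⟨A₀, hA₀D, hA₀sub, q₀, hq₀A₀, hq₀E⟩ :=
    (hbad E (hEopen.mem_nhds hxE)).nonempty
  have hxq₀ : q₀ < x := hA₀sub hq₀A₀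
  have ht' : E ∩ Ioi q₀ ∈ 𝓝 x := (hEopen.inter (hIoi q₀)).mem_nhds ⟨hxE, hxq₀⟩
  refine (hbad _ ht') ((hpf q₀).subset ?_)
  rintro A ⟨hAD, hAsub, q, hqA, hqE, hqlt⟩
  refine ⟨hAD, ?_⟩
  have hxq : q < x := hAsub hqA
  have hAnE : ¬ A ⊆ E := by
    intro hsub
    have hAE := hmax A hAD E hE hsub
    have : x ∈ A := hAE ▸ hxE
    exact lt_irrefl x (hAsub this)
  obtain ⟨p, hpA, hpE⟩ := Set.not_subset.mp hAnE
  have hqlep : p ≤ q := by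
    by_contra h
    push_neg at h
    exact hpE ((hconv E hE).out hqE hxE ⟨le_of_lt h, le_of_lt (hAsub hpA)⟩)
  have hq₀p : p ≤ q₀ := by
    by_contra h
    push_neg at h
    exact hpE ((hconv E hE).out hq₀E hqE ⟨le_of_lt h, hqlep⟩)
  exact (hconv A hAD).out hpA hqA ⟨hq₀p, le_of_lt hqlt⟩

/-- The maximal members of a point-finite open convex cover of a GO-space form a
locally finite family. -/
theorem maxLF {D : Set (Set X)}
    (hIio : ∀ a : X, IsOpen (Set.Iio a)) (hIoi : ∀ a : X, IsOpen (Set.Ioi a))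
    (hpf : ∀ y : X, {A ∈ D | y ∈ A}.Finite)
    (hconv : ∀ A ∈ D, A.OrdConnected)
    (hopen : ∀ A ∈ D, IsOpen A)
    (hcov : ∀ y : X, ∃ A ∈ D, y ∈ A)
    (hmax : ∀ A ∈ D, ∀ B ∈ D, A ⊆ B → A = B)
    (x : X) : ∃ t ∈ 𝓝 x, {A ∈ D | (A ∩ t).Nonempty}.Finite := by
  by_contra hc
  push_neg at hc
  have hdich : ∀ A ∈ D, x ∉ A → A ⊆ Ioi x ∨ A ⊆ Iio x := by
    intro A hAD hxA
    by_cases hR : A ⊆ Ioi x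
    · exact Or.inl hR
    · refine Or.inr fun a ha => ?_
      rcases lt_trichotomy a x with h | h | h
      · exact h
      · exact absurd (h ▸ ha) hxA
      · obtain ⟨b, hbA, hbx⟩ := Set.not_subset.mp hR
        exact absurd ((hconv A hAD).out hbA ha ⟨le_of_not_gt hbx, le_of_lt h⟩) hxA
  have hside : (∀ t ∈ 𝓝 x, {A ∈ D | A ⊆ Ioi x ∧ (A ∩ t).Nonempty}.Infinite) ∨
      (∀ t ∈ 𝓝 x, {A ∈ D | A ⊆ Iio x ∧ (A ∩ t).Nonempty}.Infinite) := by
    by_contra h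
    push_neg at h
    obtain ⟨⟨t₁, ht₁, h₁⟩, ⟨t₂, ht₂, h₂⟩⟩ := h
    refine hc (t₁ ∩ t₂) (inter_mem ht₁ ht₂) ?_
    refine (((hpf x).union h₁).union h₂).subset ?_
    rintro A ⟨hAD, hne⟩
    by_cases hxA : x ∈ A
    · exact Or.inl (Or.inl ⟨hAD, hxA⟩)
    · rcases hdich A hAD hxA with hR | hL
      · exact Or.inl (Or.inr ⟨hAD, hR, hne.mono (inter_subset_inter_right A inter_subset_left)⟩)
      · exact Or.inr ⟨hAD, hL, hne.mono (inter_subset_inter_right A inter_subset_right)⟩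
  obtain ⟨E, hED, hxE⟩ := hcov x
  rcases hside with hbad | hbad
  · exact side_contra_right hIio hpf hconv hmax hED hxE (hopen E hED) hbad
  · exact side_contra_left hIoi hpf hconv hmax hED hxE (hopen E hED) hbad

end Stmt14Aux

open Stmt14Aux

/-- A monotonically metacompact GO-space has a monotone open locally-finite operator. -/
theorem stmt14 [LinearOrder X] [TopologicalSpace X] (hGO : IsGOSpace X)
    (r : Set (Set X) → Set (Set X))
    (h1 : ∀ U, IsOpenCover U →
      (∀ A ∈ r U, IsOpen A) ∧ ⋃₀ r U = Set.univ ∧ Refines (r U) U ∧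
        ∀ x : X, {A ∈ r U | x ∈ A}.Finite)
    (h2 : ∀ U V, IsOpenCover U → IsOpenCover V → Refines U V → Refines (r U) (r V)) :
    ∃ r' : Set (Set X) → Set (Set X),
      (∀ U, IsOpenCover U →
        (∀ A ∈ r' U, IsOpen A) ∧ ⋃₀ r' U = Set.univ ∧ Refines (r' U) U ∧
          ∀ x : X, ∃ t ∈ 𝓝 x, {A ∈ r' U | (A ∩ t).Nonempty}.Finite) ∧
      ∀ U V, IsOpenCover U → IsOpenCover V → Refines U V → Refines (r' U) (r' V) := by
  classical
  obtain ⟨hIio, hIoi, hbase⟩ := hGO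
  refine ⟨fun U => {C | C ∈ comps r U ∧ ∀ E ∈ comps r U, C ⊆ E → C = E}, ?_, ?_⟩
  · intro U hU
    have hVU : IsOpenCover (convCover U) := convCover_isOpenCover hbase hU
    obtain ⟨hop, hcovU, href, hpfr⟩ := h1 _ hVU
    have hpfc : ∀ y : X, {C ∈ comps r U | y ∈ C}.Finite := comps_pf hpfr
    -- pointwise cover
    have hcovpt : ∀ y : X,
        ∃ C, (C ∈ comps r U ∧ ∀ E ∈ comps r U, C ⊆ E → C = E) ∧ y ∈ C := by
      intro y
      have hy : y ∈ ⋃₀ r (convCover U) := hcovU.symm ▸ mem_univ y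
      obtain ⟨A, hA, hyA⟩ := hy
      have hCm : convHullAt A y ∈ comps r U := ⟨A, hA, y, hyA, rfl⟩
      obtain ⟨M, hM, hCM, hMmax⟩ := exists_maximal hpfc hCm (mem_convHullAt hyA)
      exact ⟨M, ⟨hM, hMmax⟩, hCM (mem_convHullAt hyA)⟩
    refine ⟨?_, ?_, ?_, ?_⟩
    · rintro A ⟨⟨B, hB, y, hyB, rfl⟩, -⟩
      exact convHullAt_isOpen hbase (hop B hB) y
    · apply Set.eq_univ_of_forall
      intro y
      obtain ⟨C, hC, hyC⟩ := hcovpt y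
      exact ⟨C, hC, hyC⟩
    · rintro A ⟨⟨B, hB, y, hyB, rfl⟩, -⟩
      obtain ⟨s, hs, hBs⟩ := href B hB
      obtain ⟨t, htU, hst⟩ := hs.2.2
      exact ⟨t, htU, (convHullAt_subset B y).trans (hBs.trans hst)⟩
    · intro x
      refine maxLF hIio hIoi ?_ ?_ ?_ ?_ ?_ x
      · intro y
        exact (hpfc y).subset (fun C hC => ⟨hC.1.1, hC.2⟩)
      · rintro A ⟨⟨B, hB, y, hyB, rfl⟩, -⟩
        exact convHullAt_ordConnected B y
      · rintro A ⟨⟨B, hB, y, hyB, rfl⟩, -⟩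
        exact convHullAt_isOpen hbase (hop B hB) y
      · intro y
        obtain ⟨C, hC, hyC⟩ := hcovpt y
        exact ⟨C, hC, hyC⟩
      · rintro A ⟨hAc, hAmax⟩ B ⟨hBc, -⟩ hAB
        exact hAmax B hBc hAB
  · intro U W hU hW hUW
    have hVU : IsOpenCover (convCover U) := convCover_isOpenCover hbase hU
    have hVW : IsOpenCover (convCover W) := convCover_isOpenCover hbase hW
    have hrr : Refines (r (convCover U)) (r (convCover W)) :=
      h2 _ _ hVU hVW (convCover_mono hUW)
    obtain ⟨-, -, -, hpfrW⟩ := h1 _ hVW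
    have hpfcW : ∀ y : X, {C ∈ comps r W | y ∈ C}.Finite := comps_pf hpfrW
    rintro A ⟨⟨B, hB, y, hyB, rfl⟩, -⟩
    obtain ⟨B', hB', hBB'⟩ := hrr B hB
    have hyB' : y ∈ B' := hBB' hyB
    have hsub : convHullAt B y ⊆ convHullAt B' y :=
      subset_convHullAt ((convHullAt_subset B y).trans hBB') (mem_convHullAt hyB)
        (convHullAt_ordConnected B y)
    have hC'm : convHullAt B' y ∈ comps r W := ⟨B', hB', y, hyB', rfl⟩
    obtain ⟨M, hM, hCM, hMmax⟩ := exists_maximal hpfcW hC'm (mem_convHullAt hyB')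
    exact ⟨M, ⟨hM, hMmax⟩, hsub.trans hCM⟩
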